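/- Let t₁ ∈ ℝ, let γ : [t₁, ∞) → ℝ be locally integrable, let l ∈ ℕ, let α₁, …, α_l ∈ (0, ∞) with α₁ < ⋯ < α_l, let λ₁, …, λ_l ∈ ℝ with λ_l < 0, and let s₁, …, s_l ∈ ℝ with s_k ≤ t₁ for all k. Assume that γ(u) ≤ ∑_{k=1}^{l} λ_k · α_k · (u − s_k)^{α_k − 1} for almost every u ∈ [t₁, ∞). Then for every ε > 0 and every δ > 0 the series ∑_{n=1}^{∞} exp( ε · ∫_{t₁}^{t₁ + δ(n−1)} γ(u) du ) converges. -/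

import Mathlib

open MeasureTheory Filter

private lemma aux_rpow_littleO (c p q : ℝ) (hp : 0 < p) (hpq : p < q) :
    (fun x : ℝ => (x - c) ^ p) =o[atTop] fun x : ℝ => x ^ q := by
  have h1 : (fun x : ℝ => (x - c) ^ p) =O[atTop] fun x : ℝ => x ^ p := by
    rw [Asymptotics.isBigO_iff]
    refine ⟨2 ^ p, ?_⟩
    filter_upwards [eventually_ge_atTop (max |c| 0)] with x hx
    have hx0 : (0:ℝ) ≤ x := le_trans (le_max_right _ _) hx
    have habs : |c| ≤ x := le_trans (le_max_left _ _) hx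
    have hxc : 0 ≤ x - c := by
      have := (abs_le.mp habs).2; have := (abs_le.mp habs).1; linarith [neg_abs_le c, le_abs_self c]
    have h2x : x - c ≤ 2 * x := by
      have := neg_abs_le c; linarith
    rw [Real.norm_eq_abs, Real.norm_eq_abs, abs_of_nonneg (Real.rpow_nonneg hxc p),
      abs_of_nonneg (Real.rpow_nonneg hx0 p)]
    calc (x - c) ^ p ≤ (2 * x) ^ p := Real.rpow_le_rpow hxc h2x hp.le
      _ = 2 ^ p * x ^ p := Real.mul_rpow (by norm_num) hx0
  have h2 : (fun x : ℝ => x ^ p) =o[atTop] fun x : ℝ => x ^ q := by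
    rw [Asymptotics.isLittleO_iff]
    intro ε hε
    have htend : Tendsto (fun x : ℝ => x ^ (-(q - p))) atTop (nhds 0) :=
      tendsto_rpow_neg_atTop (by linarith)
    filter_upwards [htend.eventually_lt_const hε, eventually_gt_atTop 0] with x hxe hx0
    rw [Real.norm_eq_abs, Real.norm_eq_abs, abs_of_nonneg (Real.rpow_nonneg hx0.le p),
      abs_of_nonneg (Real.rpow_nonneg hx0.le q)]
    have : x ^ p = x ^ (-(q - p)) * x ^ q := by
      rw [← Real.rpow_add hx0]; ring_nf
    rw [this]
    have hq0 : 0 ≤ x ^ q := Real.rpow_nonneg hx0.le q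
    exact mul_le_mul_of_nonneg_right hxe.le hq0
  exact h1.trans_isLittleO h2

theorem stmt_14 (t₁ : ℝ) (γ : ℝ → ℝ)
    (hγint : ∀ t, t₁ ≤ t → IntervalIntegrable γ volume t₁ t)
    (l : ℕ) (α lam s : Fin (l + 1) → ℝ)
    (hαpos : ∀ k, 0 < α k) (hαmono : StrictMono α)
    (hlaml : lam (Fin.last l) < 0) (hs : ∀ k, s k ≤ t₁)
    (hγle : ∀ᵐ u ∂(volume.restrict (Set.Ici t₁)),
      γ u ≤ ∑ k, lam k * α k * (u - s k) ^ (α k - 1)) :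
    ∀ ε > (0:ℝ), ∀ δ > (0:ℝ),
      Summable (fun n : ℕ => Real.exp (ε * ∫ u in t₁..(t₁ + δ * n), γ u)) := by
  intro ε hε δ hδ
  set L : Fin (l + 1) := Fin.last l with hL
  set a : ℝ := α L with ha
  have hapos : 0 < a := hαpos L
  -- integrability of the individual power terms
  have hint : ∀ (k : Fin (l + 1)) (T : ℝ),
      IntervalIntegrable (fun u => (u - s k) ^ (α k - 1)) volume t₁ T := by
    intro k T
    have h := (intervalIntegral.intervalIntegrable_rpow'
      (a := t₁ - s k) (b := T - s k) (r := α k - 1) (by linarith [hαpos k])).comp_sub_right (s k)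
    simpa using h
  have hgint : ∀ T, IntervalIntegrable
      (fun u => ∑ k, lam k * α k * (u - s k) ^ (α k - 1)) volume t₁ T := by
    intro T
    have h := IntervalIntegrable.sum (μ := volume) (a := t₁) (b := T) Finset.univ
      (f := fun (k : Fin (l+1)) (u : ℝ) => lam k * α k * (u - s k) ^ (α k - 1))
      (fun k _ => (hint k T).const_mul _)
    have heq : (∑ k : Fin (l+1), fun (u : ℝ) => lam k * α k * (u - s k) ^ (α k - 1))
        = fun u => ∑ k, lam k * α k * (u - s k) ^ (α k - 1) := by
      funext u; simp
    rwa [heq] at h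
  -- value of each elementary integral
  have hval : ∀ (k : Fin (l + 1)) (T : ℝ),
      (∫ u in t₁..T, (u - s k) ^ (α k - 1))
        = ((T - s k) ^ α k - (t₁ - s k) ^ α k) / α k := by
    intro k T
    rw [intervalIntegral.integral_comp_sub_right (fun v => v ^ (α k - 1)) (s k),
      integral_rpow (Or.inl (by linarith [hαpos k]))]
    norm_num
  set F : ℝ → ℝ := fun T => ∑ k, lam k * ((T - s k) ^ α k - (t₁ - s k) ^ α k) with hF
  have hgval : ∀ T, (∫ u in t₁..T, ∑ k, lam k * α k * (u - s k) ^ (α k - 1)) = F T := by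
    intro T
    rw [intervalIntegral.integral_finset_sum (fun k _ => (hint k T).const_mul (lam k * α k))]
    refine Finset.sum_congr rfl fun k _ => ?_
    have hk : α k ≠ 0 := (hαpos k).ne'
    rw [intervalIntegral.integral_const_mul, hval k T]
    field_simp
  -- Step 1 : the integral is bounded by F
  have hIle : ∀ n : ℕ, (∫ u in t₁..(t₁ + δ * n), γ u) ≤ F (t₁ + δ * n) := by
    intro n
    have hT : t₁ ≤ t₁ + δ * n := le_add_of_nonneg_right (by positivity)
    have hae : γ ≤ᵐ[volume.restrict (Set.Icc t₁ (t₁ + δ * n))]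
        fun u => ∑ k, lam k * α k * (u - s k) ^ (α k - 1) :=
      ae_restrict_of_ae_restrict_of_subset (Set.Icc_subset_Ici_self) hγle
    have h := intervalIntegral.integral_mono_ae_restrict hT (hγint _ hT) (hgint _) hae
    exact h.trans_eq (hgval _)
  -- Step 2 : asymptotics of F
  set c₀ : ℝ := (-lam L) / 2 ^ a with hc₀
  have h2a : (0:ℝ) < 2 ^ a := Real.rpow_pos_of_pos two_pos a
  have hc₀pos : 0 < c₀ := div_pos (by linarith) h2a
  set C : ℝ := ∑ k, lam k * (t₁ - s k) ^ α k with hC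
  set R : ℝ → ℝ := fun x => ∑ k ∈ Finset.univ.erase L, lam k * (x - s k) ^ α k with hR
  have hFsplit : ∀ x, F x = lam L * (x - s L) ^ a + (R x - C) := by
    intro x
    have : F x = (∑ k, lam k * (x - s k) ^ α k) - C := by
      rw [hF, hC, ← Finset.sum_sub_distrib]
      exact Finset.sum_congr rfl fun k _ => by ring
    rw [this, ← Finset.sum_erase_add _ _ (Finset.mem_univ L)]
    rw [hR, ha]
    ring
  have hRlittle : (fun x => R x - C) =o[atTop] fun x : ℝ => x ^ a := by
    have h1 : (fun x => R x) =o[atTop] fun x : ℝ => x ^ a := by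
      refine Asymptotics.IsLittleO.fun_sum fun k hk => ?_
      have hklt : k < L := Fin.lt_last_iff_ne_last.mpr (Finset.ne_of_mem_erase hk)
      exact ((aux_rpow_littleO (s k) (α k) a (hαpos k) (hαmono hklt)).const_mul_left (lam k))
    have h2 : (fun _ : ℝ => C) =o[atTop] fun x : ℝ => x ^ a := by
      rw [Asymptotics.isLittleO_const_left]
      refine Or.inr ?_
      have : Tendsto (fun x : ℝ => |x ^ a|) atTop atTop :=
        tendsto_abs_atTop_atTop.comp (tendsto_rpow_atTop hapos)
      simpa [Function.comp_def, Real.norm_eq_abs] using this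
    exact h1.sub h2
  have hFev : ∀ᶠ x in atTop, F x ≤ -(c₀ / 2) * x ^ a := by
    filter_upwards [hRlittle.def (by positivity : (0:ℝ) < c₀ / 2),
      eventually_ge_atTop (max (2 * s L) 0)] with x hx1 hx2
    have hx0 : (0:ℝ) ≤ x := le_trans (le_max_right _ _) hx2
    have h2s : 2 * s L ≤ x := le_trans (le_max_left _ _) hx2
    have hxs : 0 ≤ x - s L := by
      rcases le_or_gt (s L) 0 with h | h <;> linarith
    have hble : x ^ a ≤ 2 ^ a * (x - s L) ^ a := by
      calc x ^ a ≤ (2 * (x - s L)) ^ a := Real.rpow_le_rpow hx0 (by linarith) hapos.le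
        _ = 2 ^ a * (x - s L) ^ a := Real.mul_rpow (by norm_num) hxs
    have hmain : lam L * (x - s L) ^ a ≤ -c₀ * x ^ a := by
      rw [hc₀, neg_div, neg_neg, div_mul_eq_mul_div, le_div_iff₀ h2a]
      nlinarith [mul_nonneg (neg_nonneg.mpr hlaml.le) (sub_nonneg.mpr hble)]
    have hxa0 : (0:ℝ) ≤ x ^ a := Real.rpow_nonneg hx0 a
    have hRb : R x - C ≤ c₀ / 2 * x ^ a := by
      have := hx1
      rw [Real.norm_eq_abs, Real.norm_eq_abs, abs_of_nonneg hxa0] at this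
      linarith [(abs_le.mp this).2]
    rw [hFsplit x]
    linarith
  -- pass to the sequence n ↦ t₁ + δ n
  have hxn : Tendsto (fun n : ℕ => t₁ + δ * n) atTop atTop :=
    tendsto_atTop_add_const_left _ t₁ (tendsto_natCast_atTop_atTop.const_mul_atTop hδ)
  set K : ℝ := ε * (c₀ / 2) * (δ / 2) ^ a with hK
  have hKpos : 0 < K := by
    have : (0:ℝ) < (δ / 2) ^ a := Real.rpow_pos_of_pos (by linarith) a
    positivity
  have hlog : ∀ᶠ x : ℝ in atTop, ‖Real.log x‖ ≤ K / 2 * ‖x ^ a‖ :=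
    (isLittleO_log_rpow_atTop hapos).def (by positivity)
  have hev2 : ∀ᶠ n : ℕ in atTop, ε * F (t₁ + δ * n) ≤ -2 * Real.log n := by
    filter_upwards [hxn.eventually hFev, tendsto_natCast_atTop_atTop.eventually hlog,
      eventually_ge_atTop 1, tendsto_natCast_atTop_atTop.eventually
        (eventually_ge_atTop (-t₁ / (δ / 2)))] with n hn hlg hn1 hnt
    have hn0 : (1:ℝ) ≤ (n:ℝ) := by exact_mod_cast hn1
    have hδ2 : (0:ℝ) < δ / 2 := by linarith
    have hxge : δ / 2 * n ≤ t₁ + δ * n := by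
      have : -t₁ ≤ δ / 2 * n := by
        rw [div_le_iff₀ hδ2] at hnt; linarith
      linarith
    have hxnn : (0:ℝ) ≤ δ / 2 * n := by positivity
    have hpow : (δ / 2) ^ a * (n:ℝ) ^ a ≤ (t₁ + δ * n) ^ a := by
      rw [← Real.mul_rpow hδ2.le (by positivity)]
      exact Real.rpow_le_rpow hxnn hxge hapos.le
    have hna0 : (0:ℝ) ≤ (n:ℝ) ^ a := Real.rpow_nonneg (by positivity) a
    have hlogn : Real.log n ≤ K / 2 * (n:ℝ) ^ a := by
      rw [Real.norm_eq_abs, Real.norm_eq_abs, abs_of_nonneg hna0] at hlg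
      exact (le_abs_self _).trans hlg
    have h1 : ε * F (t₁ + δ * n) ≤ -(ε * (c₀ / 2)) * (t₁ + δ * n) ^ a := by
      have := mul_le_mul_of_nonneg_left hn hε.le
      calc ε * F (t₁ + δ * n) ≤ ε * (-(c₀ / 2) * (t₁ + δ * n) ^ a) := this
        _ = -(ε * (c₀ / 2)) * (t₁ + δ * n) ^ a := by ring
    have h2 : -(ε * (c₀ / 2)) * (t₁ + δ * n) ^ a ≤ -K * (n:ℝ) ^ a := by
      have hεc : 0 < ε * (c₀ / 2) := by positivity
      have := mul_le_mul_of_nonneg_left hpow hεc.le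
      calc -(ε * (c₀ / 2)) * (t₁ + δ * n) ^ a
          ≤ -(ε * (c₀ / 2)) * ((δ / 2) ^ a * (n:ℝ) ^ a) := by nlinarith
        _ = -K * (n:ℝ) ^ a := by rw [hK]; ring
    have h3 : -K * (n:ℝ) ^ a ≤ -2 * Real.log n := by nlinarith
    linarith
  -- conclusion
  have hfinal : ∀ᶠ n : ℕ in atTop,
      Real.exp (ε * ∫ u in t₁..(t₁ + δ * n), γ u) ≤ (n:ℝ) ^ (-2:ℝ) := by
    filter_upwards [hev2, eventually_ge_atTop 1] with n hn hn1
    have hn0 : (0:ℝ) < n := by exact_mod_cast hn1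
    have hle : ε * ∫ u in t₁..(t₁ + δ * n), γ u ≤ -2 * Real.log n :=
      le_trans (mul_le_mul_of_nonneg_left (hIle n) hε.le) hn
    calc Real.exp (ε * ∫ u in t₁..(t₁ + δ * n), γ u)
        ≤ Real.exp (-2 * Real.log n) := Real.exp_le_exp.mpr hle
      _ = (n:ℝ) ^ (-2:ℝ) := by rw [Real.rpow_def_of_pos hn0]; ring_nf
  apply summable_of_isBigO_nat (Real.summable_nat_rpow.mpr (by norm_num : (-2:ℝ) < -1))
  rw [Asymptotics.isBigO_iff]
  refine ⟨1, ?_⟩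
  filter_upwards [hfinal] with n hn
  rw [Real.norm_eq_abs, Real.norm_eq_abs, abs_of_pos (Real.exp_pos _), one_mul]
  exact hn.trans (le_abs_self _)
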